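/- The map sending a continuous group homomorphism λ' : F^× → N to the composite λ' ∘ det : GL_n(F) → N is a bijection from the set of continuous group homomorphisms F^× → N onto the set of continuous group homomorphisms GL_n(F) → N. In particular, every continuous group homomorphism λ : GL_n(F) → N factors as λ = λ' ∘ det for a unique continuous homomorphism λ' : F^× → N. -/

import Mathlib

open Matrix

section AddAux
variable {G : Type*} [Group G] {N : Type*} [AddCommGroup N]

lemma auxL_one (L : G → N) (hL : ∀ g h, L (g*h) = L g + L h) : L 1 = 0 := by
  have h := hL 1 1
  rw [one_mul] at h
  exact (left_eq_add.mp h)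

lemma auxL_inv (L : G → N) (hL : ∀ g h, L (g*h) = L g + L h) (g : G) : L g⁻¹ = - L g := by
  have h := hL g g⁻¹
  rw [mul_inv_cancel, auxL_one L hL] at h
  exact eq_neg_of_add_eq_zero_right h.symm

lemma auxL_conj (L : G → N) (hL : ∀ g h, L (g*h) = L g + L h) (a x : G) :
    L (a * x * a⁻¹) = L x := by
  rw [hL, hL, auxL_inv L hL]
  abel

lemma auxL_listprod (L : G → N) (hL : ∀ g h, L (g*h) = L g + L h) :
    ∀ lst : List G, (∀ x ∈ lst, L x = 0) → L lst.prod = 0 := by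
  intro lst
  induction lst with
  | nil => intro _; simpa using auxL_one L hL
  | cons a t ih =>
      intro h
      rw [List.prod_cons, hL, h a (by simp), ih (fun x hx => h x (by simp [hx]))]
      simp

lemma auxL_listsum (L : G → N) (hL : ∀ g h, L (g*h) = L g + L h) :
    ∀ lst : List G, L lst.prod = (lst.map L).sum := by
  intro lst
  induction lst with
  | nil => simpa using auxL_one L hL
  | cons a t ih => rw [List.prod_cons, hL, ih, List.map_cons, List.sum_cons]
end AddAux

section CommAux
variable {A : Type*} [CommGroup A] {N : Type*} [AddCommGroup N]

lemma auxl_finprod {ι : Type*} (l : A → N) (hl : ∀ a b, l (a*b) = l a + l b)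
    (s : Finset ι) (f : ι → A) : l (∏ i ∈ s, f i) = ∑ i ∈ s, l (f i) := by
  classical
  induction s using Finset.cons_induction with
  | empty => simpa using auxL_one l hl
  | cons a s ha ih => rw [Finset.prod_cons, Finset.sum_cons, hl, ih]
end CommAux
section GLAux
variable {F : Type*} [Field F] {n : ℕ}

/-- diagonal matrix of units, as an element of GL. -/
def dUnit (d : Fin n → Fˣ) : GL (Fin n) F where
  val := diagonal (fun i => (d i : F))
  inv := diagonal (fun i => ((d i)⁻¹ : Fˣ))
  val_inv := by rw [diagonal_mul_diagonal]; simp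
  inv_val := by rw [diagonal_mul_diagonal]; simp

lemma dUnit_mul (d e : Fin n → Fˣ) : dUnit (F := F) (d * e) = dUnit d * dUnit e := by
  ext : 1
  show diagonal _ = diagonal _ * diagonal _
  rw [diagonal_mul_diagonal]
  simp

/-- transvection as an element of GL. -/
def tUnit (t : TransvectionStruct (Fin n) F) : GL (Fin n) F where
  val := t.toMatrix
  inv := t.inv.toMatrix
  val_inv := t.mul_inv
  inv_val := t.inv_mul

lemma diag_mul_transvection_mul_diag (d d' : Fin n → F) (h : ∀ k, d k * d' k = 1)
    (i j : Fin n) (c : F) :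
    diagonal d * transvection i j c * diagonal d' = transvection i j (d i * c * d' j) := by
  ext a b
  simp only [transvection, Matrix.add_mul, Matrix.mul_add, Matrix.add_apply, Matrix.one_mul,
    Matrix.mul_one, Matrix.mul_diagonal, Matrix.diagonal_mul, Matrix.single,
    Matrix.of_apply]
  have key : ∀ a b : Fin n, diagonal d a b * d' b = (1 : Matrix (Fin n) (Fin n) F) a b := by
    intro a b
    rcases eq_or_ne a b with rfl | hab
    · simp [h]
    · simp [diagonal_apply_ne _ hab, one_apply_ne hab]
  rcases eq_or_ne i a with rfl | ha
  · rcases eq_or_ne j b with rfl | hb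
    · simp only [and_self, if_true, eq_self_iff_true, if_pos trivial]
      rw [add_mul, key i j]
    · simp [hb, key]
  · simp [ha, key]

end GLAux
section GLAux2
variable {F : Type*} [Field F] {n : ℕ}

lemma dUnit_conj_tUnit (i j : Fin n) (hij : i ≠ j) (c : F) (u : Fˣ) :
    dUnit (Pi.mulSingle i u) * tUnit ⟨i, j, hij, c⟩ * (dUnit (F := F) (Pi.mulSingle i u))⁻¹
      = tUnit ⟨i, j, hij, (u : F) * c⟩ := by
  ext : 1
  show diagonal (fun k => ((Pi.mulSingle i u : Fin n → Fˣ) k : F)) * transvection i j c *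
      diagonal (fun k => ((((Pi.mulSingle i u : Fin n → Fˣ) k)⁻¹ : Fˣ) : F)) = transvection i j ((u : F) * c)
  rw [diag_mul_transvection_mul_diag _ _ (fun k => Units.mul_inv _) i j c]
  simp [Pi.mulSingle_eq_of_ne hij.symm]

lemma tUnit_mul (i j : Fin n) (hij : i ≠ j) (c d : F) :
    tUnit ⟨i, j, hij, c⟩ * tUnit ⟨i, j, hij, d⟩ = tUnit (F := F) ⟨i, j, hij, c + d⟩ := by
  ext : 1
  exact transvection_mul_transvection_same i j hij c d

lemma tUnit_zero (i j : Fin n) (hij : i ≠ j) : tUnit (F := F) ⟨i, j, hij, 0⟩ = 1 := by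
  ext : 1
  exact transvection_zero i j

lemma L_tUnit {N : Type*} [AddCommGroup N] (L : GL (Fin n) F → N)
    (hL : ∀ g h, L (g * h) = L g + L h) (hF : ∃ x : F, x ≠ 0 ∧ 1 + x ≠ 0)
    (t : TransvectionStruct (Fin n) F) : L (tUnit t) = 0 := by
  obtain ⟨i, j, hij, c⟩ := t
  obtain ⟨x, hx0, hx1⟩ := hF
  have scale : ∀ (u : Fˣ) (c : F),
      L (tUnit ⟨i, j, hij, (u : F) * c⟩) = L (tUnit ⟨i, j, hij, c⟩) := by
    intro u c
    rw [← dUnit_conj_tUnit i j hij c u, auxL_conj L hL]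
  rcases eq_or_ne c 0 with rfl | hc
  · rw [tUnit_zero]; exact auxL_one L hL
  · have h1 : L (tUnit ⟨i, j, hij, (1 + x) * c⟩) = L (tUnit ⟨i, j, hij, c⟩) := by
      simpa using scale (Units.mk0 (1 + x) hx1) c
    have h2 : L (tUnit ⟨i, j, hij, (1 + x) * c⟩)
        = L (tUnit ⟨i, j, hij, c⟩) + L (tUnit ⟨i, j, hij, c⟩) := by
      have hs := scale (Units.mk0 x hx0) c
      simp only [Units.val_mk0] at hs
      rw [add_mul, one_mul, ← tUnit_mul i j hij c (x * c), hL, hs]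
    exact add_eq_left.mp (h2.symm.trans h1)

/-- permutation matrix of an involution -/
def pMat (σ : Equiv.Perm (Fin n)) : Matrix (Fin n) (Fin n) F :=
  Matrix.of fun a b => if a = σ b then 1 else 0

lemma pMat_mul_diag (σ : Equiv.Perm (Fin n)) (hσ : ∀ k, σ (σ k) = k) (e : Fin n → F) :
    pMat σ * diagonal e = diagonal (fun k => e (σ k)) * pMat σ := by
  ext a b
  rw [Matrix.mul_diagonal, Matrix.diagonal_mul]
  show (if a = σ b then (1:F) else 0) * e b = e (σ a) * (if a = σ b then (1:F) else 0)
  split_ifs with h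
  · subst h; rw [hσ]; ring
  · ring

lemma pMat_mul_pMat (σ : Equiv.Perm (Fin n)) (hσ : ∀ k, σ (σ k) = k) :
    pMat σ * pMat (F := F) σ = 1 := by
  ext a b
  rw [Matrix.mul_apply]
  rw [Finset.sum_eq_single (σ b)]
  · show (if a = σ (σ b) then (1:F) else 0) * (if σ b = σ b then (1:F) else 0) = (1 : Matrix (Fin n) (Fin n) F) a b
    rw [hσ, if_pos rfl, mul_one, Matrix.one_apply]
  · intro k _ hk
    show (if a = σ k then (1:F) else 0) * (if k = σ b then (1:F) else 0) = 0
    rw [if_neg hk, mul_zero]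
  · simp

/-- permutation (involution) as an element of GL -/
def pUnit (σ : Equiv.Perm (Fin n)) (hσ : ∀ k, σ (σ k) = k) : GL (Fin n) F where
  val := pMat σ
  inv := pMat σ
  val_inv := pMat_mul_pMat σ hσ
  inv_val := pMat_mul_pMat σ hσ

lemma pUnit_conj_dUnit (σ : Equiv.Perm (Fin n)) (hσ : ∀ k, σ (σ k) = k) (d : Fin n → Fˣ) :
    pUnit σ hσ * dUnit d * (pUnit (F := F) σ hσ)⁻¹ = dUnit (fun k => d (σ k)) := by
  ext : 1
  show pMat σ * diagonal (fun k => (d k : F)) * pMat σ = diagonal (fun k => (d (σ k) : F))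
  rw [pMat_mul_diag σ hσ, Matrix.mul_assoc, pMat_mul_pMat σ hσ, Matrix.mul_one]

end GLAux2
section GLAux3
variable {F : Type*} [Field F] {n : ℕ}

/-- `dUnit` as a monoid hom. -/
def dHomU : (Fin n → Fˣ) →* GL (Fin n) F where
  toFun := dUnit
  map_one' := by
    ext : 1
    show diagonal _ = (1 : Matrix (Fin n) (Fin n) F)
    simp [← diagonal_one]
  map_mul' d e := dUnit_mul d e

lemma dUnit_eq_listProd (d : Fin n → Fˣ) :
    dUnit (F := F) d = ((List.finRange n).map (fun i => dUnit (Pi.mulSingle i (d i)))).prod := by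
  have hd : d = ((List.finRange n).map (fun i => Pi.mulSingle i (d i))).prod := by
    rw [← Fin.prod_univ_def]
    exact (Finset.univ_prod_mulSingle d).symm
  conv_lhs => rw [hd]
  show dHomU _ = _
  rw [map_list_prod, List.map_map]
  rfl

lemma val_listProd_tUnit (lst : List (TransvectionStruct (Fin n) F)) :
    (((lst.map tUnit).prod : GL (Fin n) F) : Matrix (Fin n) (Fin n) F)
      = (lst.map TransvectionStruct.toMatrix).prod := by
  rw [← Units.coeHom_apply, map_list_prod, List.map_map]
  rfl

lemma det_tUnit (t : TransvectionStruct (Fin n) F) :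
    Matrix.GeneralLinearGroup.det (tUnit t) = 1 := by
  ext
  rw [Matrix.GeneralLinearGroup.val_det_apply, Units.val_one]
  exact t.det

lemma det_dUnit (d : Fin n → Fˣ) :
    Matrix.GeneralLinearGroup.det (dUnit (F := F) d) = ∏ i, d i := by
  ext
  rw [Matrix.GeneralLinearGroup.val_det_apply]
  show Matrix.det (diagonal fun i => ((d i : F))) = _
  rw [det_diagonal]
  exact (map_prod (Units.coeHom F) d Finset.univ).symm

lemma det_listProd_tUnit (lst : List (TransvectionStruct (Fin n) F)) :
    Matrix.GeneralLinearGroup.det ((lst.map tUnit).prod : GL (Fin n) F) = 1 := by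
  rw [map_list_prod, List.map_map]
  apply List.prod_eq_one
  intro x hx
  simp only [List.mem_map] at hx
  obtain ⟨t, _, rfl⟩ := hx
  exact det_tUnit t

end GLAux3
theorem continuousHom_from_GL_factors_through_det
    {F : Type*} [NontriviallyNormedField F] [IsUltrametricDist F]
    [CompleteSpace F] [LocallyCompactSpace F]
    {n : ℕ} (hn : 2 ≤ n)
    {N : Type*} [AddCommGroup N] [TopologicalSpace N] [IsTopologicalAddGroup N] :
    (∀ l : Fˣ → N, Continuous l → (∀ a b : Fˣ, l (a * b) = l a + l b) →
      Continuous (fun g : GL (Fin n) F => l (Matrix.GeneralLinearGroup.det g)) ∧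
      ∀ g h : GL (Fin n) F,
        l (Matrix.GeneralLinearGroup.det (g * h))
          = l (Matrix.GeneralLinearGroup.det g) + l (Matrix.GeneralLinearGroup.det h)) ∧
    (∀ L : GL (Fin n) F → N, Continuous L → (∀ g h : GL (Fin n) F, L (g * h) = L g + L h) →
      ∃! l : Fˣ → N, (Continuous l ∧ ∀ a b : Fˣ, l (a * b) = l a + l b) ∧
        ∀ g : GL (Fin n) F, L g = l (Matrix.GeneralLinearGroup.det g)) := by
  have hn0 : 0 < n := by omega
  set i0 : Fin n := ⟨0, hn0⟩ with hi0
  constructor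
  · intro l hlc hlm
    constructor
    · have hdet : Continuous fun g : GL (Fin n) F => Matrix.GeneralLinearGroup.det g := by
        apply Units.continuous_iff.mpr
        constructor
        · exact Continuous.matrix_det Units.continuous_val
        · have heq : (fun g : GL (Fin n) F => (((Matrix.GeneralLinearGroup.det g)⁻¹ : Fˣ) : F))
              = fun g : GL (Fin n) F =>
                Matrix.det ((g⁻¹ : GL (Fin n) F) : Matrix (Fin n) (Fin n) F) := by
            funext g
            rw [← map_inv Matrix.GeneralLinearGroup.det g,
              Matrix.GeneralLinearGroup.val_det_apply]
          rw [heq]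
          exact Continuous.matrix_det Units.continuous_coe_inv
      exact hlc.comp hdet
    · intro g h
      rw [_root_.map_mul, hlm]
  · intro L hLc hLm
    have hF : ∃ x : F, x ≠ 0 ∧ 1 + x ≠ 0 := by
      obtain ⟨x, hx⟩ := NormedField.exists_one_lt_norm F
      refine ⟨x, ?_, ?_⟩
      · rintro rfl
        simp at hx
        linarith
      · intro h
        have hx1 : x = -1 := eq_neg_of_add_eq_zero_right h
        rw [hx1] at hx
        simp at hx
    set e : Fˣ → GL (Fin n) F := fun a => dUnit (Pi.mulSingle i0 a) with he
    set l : Fˣ → N := fun a => L (e a) with hldef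
    have hedet : ∀ a : Fˣ, Matrix.GeneralLinearGroup.det (e a) = a := by
      intro a
      rw [he]
      show Matrix.GeneralLinearGroup.det (dUnit (Pi.mulSingle i0 a)) = a
      rw [det_dUnit]
      simp [Pi.mulSingle_apply]
    have hlmul : ∀ a b : Fˣ, l (a * b) = l a + l b := by
      intro a b
      show L (e (a * b)) = L (e a) + L (e b)
      have heab : e (a * b) = e a * e b := by
        show dUnit _ = dUnit _ * dUnit _
        rw [← dUnit_mul, ← Pi.mulSingle_mul]
      rw [heab, hLm]
    have hsingle : ∀ (i : Fin n) (u : Fˣ), L (dUnit (Pi.mulSingle i u)) = l u := by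
      intro i u
      have hσ : ∀ k, Equiv.swap i0 i (Equiv.swap i0 i k) = k := fun k =>
        Equiv.swap_apply_self _ _ _
      have hconj := pUnit_conj_dUnit (F := F) (Equiv.swap i0 i) hσ (Pi.mulSingle i0 u)
      have harg : (fun k => (Pi.mulSingle i0 u : Fin n → Fˣ) (Equiv.swap i0 i k))
          = (Pi.mulSingle i u : Fin n → Fˣ) := by
        funext k
        rcases eq_or_ne k i with rfl | hk
        · rw [Equiv.swap_apply_right]
          exact (Pi.mulSingle_eq_same (M := fun _ : Fin n => Fˣ) i0 u).trans
            (Pi.mulSingle_eq_same (M := fun _ : Fin n => Fˣ) _ u).symm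
        · have h2 : Equiv.swap i0 i k ≠ i0 := by
            intro h
            apply hk
            have h3 := congrArg (Equiv.swap i0 i) h
            rw [hσ, Equiv.swap_apply_left] at h3
            exact h3
          rw [Pi.mulSingle_eq_of_ne h2, Pi.mulSingle_eq_of_ne hk]
      rw [harg] at hconj
      rw [← hconj, auxL_conj L hLm]
    have hLd : ∀ d : Fin n → Fˣ, L (dUnit d) = l (∏ i, d i) := by
      intro d
      rw [dUnit_eq_listProd d, auxL_listsum L hLm, List.map_map]
      have hmap : (L ∘ fun i => dUnit (Pi.mulSingle i (d i))) = fun i => l (d i) := by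
        funext i
        exact hsingle i (d i)
      rw [hmap, ← Fin.sum_univ_def]
      exact (auxl_finprod l hlmul Finset.univ d).symm
    have hfactor : ∀ g : GL (Fin n) F, L g = l (Matrix.GeneralLinearGroup.det g) := by
      intro g
      obtain ⟨L1, L2, D, hM⟩ :=
        Matrix.Pivot.exists_list_transvec_mul_diagonal_mul_list_transvec
          ((g : Matrix (Fin n) (Fin n) F))
      have hDne : ∀ i, D i ≠ 0 := by
        have hdg : Matrix.det (g : Matrix (Fin n) (Fin n) F) ≠ 0 := by
          rw [← Matrix.GeneralLinearGroup.val_det_apply]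
          exact Units.ne_zero _
        rw [hM] at hdg
        simp only [det_mul, Matrix.TransvectionStruct.det_toMatrix_prod, det_diagonal,
          one_mul, mul_one] at hdg
        intro i hi
        exact hdg (Finset.prod_eq_zero (Finset.mem_univ i) hi)
      set Du : Fin n → Fˣ := fun i => Units.mk0 (D i) (hDne i) with hDu
      have hval : ((dUnit Du : GL (Fin n) F) : Matrix (Fin n) (Fin n) F) = diagonal D := by
        show diagonal _ = diagonal _
        congr 1
      have hgu : g = (L1.map tUnit).prod * dUnit Du * (L2.map tUnit).prod := by
        apply Units.ext
        rw [Units.val_mul, Units.val_mul, val_listProd_tUnit, val_listProd_tUnit, hval]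
        exact hM
      have hzero : ∀ lst : List (TransvectionStruct (Fin n) F), L ((lst.map tUnit).prod) = 0 := by
        intro lst
        apply auxL_listprod L hLm
        intro x hx
        simp only [List.mem_map] at hx
        obtain ⟨t, _, rfl⟩ := hx
        exact L_tUnit L hLm hF t
      have hdetg : Matrix.GeneralLinearGroup.det g = ∏ i, Du i := by
        rw [hgu, _root_.map_mul, _root_.map_mul, det_listProd_tUnit, det_listProd_tUnit, det_dUnit,
          one_mul, mul_one]
      rw [hdetg]
      conv_lhs => rw [hgu]
      rw [hLm, hLm, hzero, hzero, hLd]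
      abel
    have hec : Continuous e := by
      rw [he]
      apply Units.continuous_iff.mpr
      constructor
      · show Continuous fun a : Fˣ =>
          diagonal (fun k => (((Pi.mulSingle i0 a : Fin n → Fˣ) k : Fˣ) : F))
        apply Continuous.matrix_diagonal
        apply continuous_pi
        intro k
        rcases eq_or_ne k i0 with rfl | hk
        · simp only [Pi.mulSingle_eq_same]
          exact Units.continuous_val
        · simp only [Pi.mulSingle_eq_of_ne hk]
          exact continuous_const
      · show Continuous fun a : Fˣ =>
          diagonal (fun k => ((((Pi.mulSingle i0 a : Fin n → Fˣ) k)⁻¹ : Fˣ) : F))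
        apply Continuous.matrix_diagonal
        apply continuous_pi
        intro k
        rcases eq_or_ne k i0 with rfl | hk
        · simp only [Pi.mulSingle_eq_same]
          exact Units.continuous_coe_inv
        · simp only [Pi.mulSingle_eq_of_ne hk]
          exact continuous_const
    have hlc : Continuous l := hLc.comp hec
    refine ⟨l, ⟨⟨hlc, hlmul⟩, hfactor⟩, ?_⟩
    rintro l' ⟨⟨hl'c, hl'm⟩, hl'f⟩
    funext a
    calc l' a = l' (Matrix.GeneralLinearGroup.det (e a)) := by rw [hedet]
    _ = L (e a) := (hl'f _).symm
    _ = l a := rfl
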